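/- Wedge-sum representation of the value function on lines (Theorem 4, statement 3): Consider a finite POMDP with row-stochastic transition matrices P(u), row-stochastic observation matrices B(u) with strictly positive entries, nonnegative reward vectors r_u (r(i,u) ≥ 0 for all i, u), and discount ρ ∈ [0,1). Assume: (A1) each r_u has nondecreasing components; (A2) each P(u) is TP2; (A3) each B(u) is TP2. Then for every k ≥ 0 and every π̄ ∈ Π(X) with π̄(X) = 0, there exist n ∈ ℕ, nonnegative reals α_1,...,α_n, and reals f_1,...,f_n such that for every ε ∈ [0,1], writing π = (1−ε)π̄ + ε·e_X (so that e_Xᵀπ = ε), the value-iteration value function satisfies V_k(π) = Σ_{i=1}^{n} max(α_i·ε − f_i, 0). -/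

import Mathlib

open Finset

/-- Membership in the belief simplex Π(X). -/
def inSimplex {X : ℕ} (π : Fin X → ℝ) : Prop :=
  (∀ i, 0 ≤ π i) ∧ ∑ i, π i = 1

/-- A matrix is row-stochastic: nonnegative entries, rows summing to one. -/
def rowStochastic {n m : ℕ} (A : Matrix (Fin n) (Fin m) ℝ) : Prop :=
  (∀ i j, 0 ≤ A i j) ∧ ∀ i, ∑ j, A i j = 1

/-- Totally positive of order 2: all 2×2 minors nonnegative. -/
def TP2 {n m : ℕ} (A : Matrix (Fin n) (Fin m) ℝ) : Prop :=
  ∀ i i' : Fin n, ∀ y y' : Fin m, i < i' → y < y' →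
    A i y' * A i' y ≤ A i y * A i' y'

/-- Monotone likelihood ratio (MLR) order: `a ≤_r b`. -/
def MLRle {n : ℕ} (a b : Fin n → ℝ) : Prop :=
  ∀ i j : Fin n, i < j → a j * b i ≤ a i * b j

/-- The last index of `Fin n`. -/
def lastIdx (n : ℕ) [NeZero n] : Fin n :=
  ⟨n - 1, Nat.sub_lt (Nat.pos_of_ne_zero (NeZero.ne n)) Nat.one_pos⟩

/-- One-step predicted belief `Pᵀπ`. -/
noncomputable def bayesPred {X : ℕ} (P : Matrix (Fin X) (Fin X) ℝ) (π : Fin X → ℝ) : Fin X → ℝ :=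
  fun j => ∑ i, P i j * π i

/-- Normalization constant σ(π,y) = Σ_j B_{j,y} (Pᵀπ)_j. -/
noncomputable def obsMarg {X Y : ℕ} (B : Matrix (Fin X) (Fin Y) ℝ)
    (P : Matrix (Fin X) (Fin X) ℝ) (π : Fin X → ℝ) (y : Fin Y) : ℝ :=
  ∑ j, B j y * bayesPred P π j

/-- Bayes belief update T(π,y). -/
noncomputable def bayesT {X Y : ℕ} (B : Matrix (Fin X) (Fin Y) ℝ)
    (P : Matrix (Fin X) (Fin X) ℝ) (π : Fin X → ℝ) (y : Fin Y) : Fin X → ℝ :=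
  fun j => B j y * bayesPred P π j / obsMarg B P π y

/-- Value iteration: `V 0 ≡ 0`, `V (k+1) π = max_u [rᵤᵀπ + ρ Σ_y V k (T(π,y,u)) σ(π,y,u)]`. -/
noncomputable def VI {X Y U : ℕ} [NeZero U]
    (P : Fin U → Matrix (Fin X) (Fin X) ℝ)
    (B : Fin U → Matrix (Fin X) (Fin Y) ℝ)
    (r : Fin U → Fin X → ℝ) (ρ : ℝ) : ℕ → (Fin X → ℝ) → ℝ
  | 0 => fun _ => 0
  | (k+1) => fun π =>
      Finset.univ.sup' Finset.univ_nonempty fun u =>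
        (∑ i, r u i * π i) +
          ρ * ∑ y, VI P B r ρ k (bayesT (B u) (P u) π y) * obsMarg (B u) (P u) π y

/-- `Qfun P B r ρ k π u` is the value-iteration Q-function at horizon `k+1`,
i.e. `Q_{k+1}(π,u) = rᵤᵀπ + ρ Σ_y V_k(T(π,y,u)) σ(π,y,u)`. -/
noncomputable def Qfun {X Y U : ℕ} [NeZero U]
    (P : Fin U → Matrix (Fin X) (Fin X) ℝ)
    (B : Fin U → Matrix (Fin X) (Fin Y) ℝ)
    (r : Fin U → Fin X → ℝ) (ρ : ℝ) (k : ℕ) (π : Fin X → ℝ) (u : Fin U) : ℝ :=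
  (∑ i, r u i * π i) +
    ρ * ∑ y, VI P B r ρ k (bayesT (B u) (P u) π y) * obsMarg (B u) (P u) π y

/-- Lehmann precision of the pair `(A, C)` (i.e. `C >_L A`): for all columns `j, l`,
`g(i) = Σ_{y≤j} A i y − Σ_{y≤l} C i y` changes sign at most once,
from negative to positive, as the row `i` increases. -/
def LehmannPrec {X Y : ℕ} (A C : Matrix (Fin X) (Fin Y) ℝ) : Prop :=
  ∀ j l : Fin Y, ∀ i i' : Fin X, i ≤ i' →
    ((0 ≤ (∑ y ∈ univ.filter (· ≤ j), A i y) - ∑ y ∈ univ.filter (· ≤ l), C i y →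
      0 ≤ (∑ y ∈ univ.filter (· ≤ j), A i' y) - ∑ y ∈ univ.filter (· ≤ l), C i' y) ∧
     (0 < (∑ y ∈ univ.filter (· ≤ j), A i y) - ∑ y ∈ univ.filter (· ≤ l), C i y →
      0 < (∑ y ∈ univ.filter (· ≤ j), A i' y) - ∑ y ∈ univ.filter (· ≤ l), C i' y))

/-- Boundary/absolute-continuity condition (A7) for the pair `(A, C)` (C playing the role of
`B(u+1)`): `A_{i,1} C_{X,1} ≤ C_{i,1} A_{X,1}` and `A_{i,Y} C_{X,Y} ≥ C_{i,Y} A_{X,Y}`. -/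
def BoundaryCond {X Y : ℕ} [NeZero X] [NeZero Y] (A C : Matrix (Fin X) (Fin Y) ℝ) : Prop :=
  ∀ i : Fin X,
    A i 0 * C (lastIdx X) 0 ≤ C i 0 * A (lastIdx X) 0 ∧
    C i (lastIdx Y) * A (lastIdx X) (lastIdx Y) ≤ A i (lastIdx Y) * C (lastIdx X) (lastIdx Y)

/-- Copositive dominance `P1 ⪯ P2`. -/
def CopositiveDom {X : ℕ} (P1 P2 : Matrix (Fin X) (Fin X) ℝ) : Prop :=
  ∀ j j' : Fin X, j'.val = j.val + 1 → ∀ π : Fin X → ℝ, inSimplex π →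
    0 ≤ ∑ m, ∑ n, π m *
      ((1/2) * ((P1 m j * P2 n j' - P1 m j' * P2 n j) +
                (P1 n j * P2 m j' - P1 n j' * P2 m j))) * π n

/-- `u` is the largest maximizer of `f` over the action set. -/
def isLargestArgmax {U : ℕ} (f : Fin U → ℝ) (u : Fin U) : Prop :=
  (∀ v, f v ≤ f u) ∧ ∀ v, f u ≤ f v → v ≤ u

lemma fosd_of_mlr {n : ℕ} {a b : Fin n → ℝ} (ha : ∀ i, 0 ≤ a i) (hb : ∀ i, 0 ≤ b i)
    (hsa : ∑ i, a i = 1) (hsb : ∑ i, b i = 1) (hm : MLRle a b) (c : Fin n) :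
    ∑ i ∈ univ.filter (fun i => c ≤ i), a i ≤ ∑ i ∈ univ.filter (fun i => c ≤ i), b i := by
  classical
  set A := univ.filter (fun i : Fin n => c ≤ i) with hA
  have hsplit_a : ∑ i ∈ A, a i + ∑ i ∈ univ.filter (fun i : Fin n => ¬ c ≤ i), a i = 1 := by
    rw [hA, Finset.sum_filter_add_sum_filter_not]; exact hsa
  have hsplit_b : ∑ i ∈ A, b i + ∑ i ∈ univ.filter (fun i : Fin n => ¬ c ≤ i), b i = 1 := by
    rw [hA, Finset.sum_filter_add_sum_filter_not]; exact hsb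
  set Ac := univ.filter (fun i : Fin n => ¬ c ≤ i) with hAc
  have key : (∑ i ∈ A, a i) * (∑ j ∈ Ac, b j) ≤ (∑ i ∈ A, b i) * (∑ j ∈ Ac, a j) := by
    rw [Finset.sum_mul_sum, Finset.sum_mul_sum]
    apply Finset.sum_le_sum
    intro i hi
    apply Finset.sum_le_sum
    intro j hj
    have hci : c ≤ i := (Finset.mem_filter.1 hi).2
    have hcj : ¬ c ≤ j := (Finset.mem_filter.1 hj).2
    have hji : j < i := lt_of_lt_of_le (lt_of_not_ge hcj) hci
    have := hm j i hji
    nlinarith [this]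
  have hid : (∑ i ∈ A, a i) - (∑ i ∈ A, b i)
      = (∑ i ∈ A, a i) * (∑ j ∈ Ac, b j) - (∑ i ∈ A, b i) * (∑ j ∈ Ac, a j) := by
    linear_combination (∑ i ∈ A, b i) * hsplit_a - (∑ i ∈ A, a i) * hsplit_b
  linarith [key]


lemma exp_mono_of_fosd {n : ℕ} {a b : Fin n → ℝ} (hs : ∑ i, a i = ∑ i, b i)
    (hf : ∀ c : Fin n, ∑ i ∈ univ.filter (fun i => c ≤ i), a i
        ≤ ∑ i ∈ univ.filter (fun i => c ≤ i), b i)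
    {φ : Fin n → ℝ} (hφ : Monotone φ) :
    ∑ i, φ i * a i ≤ ∑ i, φ i * b i := by
  classical
  rcases Nat.eq_zero_or_pos n with rfl | hn
  · simp
  set d : Fin n → ℝ := fun i => b i - a i with hd
  have hsd : ∑ i, d i = 0 := by simp [hd, Finset.sum_sub_distrib, hs]
  set ψ : ℕ → ℝ := fun m => φ ⟨min m (n-1), by omega⟩ with hψ
  have hψφ : ∀ i : Fin n, ψ i.val = φ i := by
    intro i
    have : min i.val (n-1) = i.val := by omega
    simp [hψ, this]
  have hψmono : Monotone ψ := by
    intro x y hxy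
    exact hφ (by simp [Fin.le_def]; omega)
  have hφtel : ∀ i : Fin n, φ i = ψ 0 + ∑ m ∈ Finset.range n,
      (if m < i.val then ψ (m+1) - ψ m else 0) := by
    intro i
    have h1 : ∑ m ∈ Finset.range n, (if m < i.val then ψ (m+1) - ψ m else 0)
        = ∑ m ∈ (Finset.range n).filter (fun m => m < i.val), (ψ (m+1) - ψ m) := by
      rw [Finset.sum_filter]
    have h2 : (Finset.range n).filter (fun m => m < i.val) = Finset.range i.val := by
      ext m; simp; omega
    rw [h1, h2, Finset.sum_range_sub, hψφ]
    ring
  have key : 0 ≤ ∑ i, φ i * d i := by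
    have expand : ∑ i, φ i * d i
        = ψ 0 * (∑ i, d i) + ∑ m ∈ Finset.range n,
            ∑ i : Fin n, (if m < i.val then (ψ (m+1) - ψ m) * d i else 0) := by
      rw [Finset.mul_sum, Finset.sum_comm, ← Finset.sum_add_distrib]
      apply Finset.sum_congr rfl
      intro i _
      rw [hφtel i]
      rw [add_mul, Finset.sum_mul]
      congr 1
      apply Finset.sum_congr rfl
      intro m _
      split <;> simp
    rw [expand, hsd, mul_zero, zero_add]
    apply Finset.sum_nonneg
    intro m _
    have step : 0 ≤ ψ (m+1) - ψ m := sub_nonneg.2 (hψmono (Nat.le_succ m))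
    rw [← Finset.sum_filter]
    rcases lt_or_ge (m+1) n with hm | hm
    · have : (univ.filter (fun i : Fin n => m < i.val))
          = univ.filter (fun i : Fin n => (⟨m+1, hm⟩ : Fin n) ≤ i) := by
        ext i; simp [Fin.le_def]
      rw [this, ← Finset.mul_sum]
      apply mul_nonneg step
      have := hf ⟨m+1, hm⟩
      have hsub : ∑ i ∈ univ.filter (fun i : Fin n => (⟨m+1, hm⟩ : Fin n) ≤ i), d i
          = ∑ i ∈ univ.filter (fun i : Fin n => (⟨m+1, hm⟩ : Fin n) ≤ i), b i
            - ∑ i ∈ univ.filter (fun i : Fin n => (⟨m+1, hm⟩ : Fin n) ≤ i), a i := by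
        simp [hd, Finset.sum_sub_distrib]
      rw [hsub]; linarith
    · have : (univ.filter (fun i : Fin n => m < i.val)) = ∅ := by
        ext i; simp; omega
      simp [this]
  have : ∑ i, φ i * d i = ∑ i, φ i * b i - ∑ i, φ i * a i := by
    simp [hd, mul_sub, Finset.sum_sub_distrib]
  linarith

section PomdpLemmas

variable {X Y : ℕ}

lemma bayesPred_nonneg {P : Matrix (Fin X) (Fin X) ℝ} (hP : rowStochastic P)
    {π : Fin X → ℝ} (hπ : ∀ i, 0 ≤ π i) (j : Fin X) : 0 ≤ bayesPred P π j :=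
  Finset.sum_nonneg fun i _ => mul_nonneg (hP.1 i j) (hπ i)

lemma bayesPred_sum {P : Matrix (Fin X) (Fin X) ℝ} (hP : rowStochastic P)
    {π : Fin X → ℝ} (hπ : inSimplex π) : ∑ j, bayesPred P π j = 1 := by
  unfold bayesPred
  rw [Finset.sum_comm]
  have : ∀ i : Fin X, ∑ j, P i j * π i = π i := by
    intro i; rw [← Finset.sum_mul, hP.2 i, one_mul]
  calc ∑ i, ∑ j, P i j * π i = ∑ i, π i := Finset.sum_congr rfl fun i _ => this i
    _ = 1 := hπ.2

lemma obsMarg_nonneg {B : Matrix (Fin X) (Fin Y) ℝ} {P : Matrix (Fin X) (Fin X) ℝ}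
    (hB : ∀ i y, 0 ≤ B i y) (hP : rowStochastic P) {π : Fin X → ℝ} (hπ : ∀ i, 0 ≤ π i)
    (y : Fin Y) : 0 ≤ obsMarg B P π y :=
  Finset.sum_nonneg fun j _ => mul_nonneg (hB j y) (bayesPred_nonneg hP hπ j)

lemma obsMarg_sum {B : Matrix (Fin X) (Fin Y) ℝ} {P : Matrix (Fin X) (Fin X) ℝ}
    (hB : rowStochastic B) (hP : rowStochastic P) {π : Fin X → ℝ} (hπ : inSimplex π) :
    ∑ y, obsMarg B P π y = 1 := by
  unfold obsMarg
  rw [Finset.sum_comm]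
  have : ∀ j : Fin X, ∑ y, B j y * bayesPred P π j = bayesPred P π j := by
    intro j; rw [← Finset.sum_mul, hB.2 j, one_mul]
  calc ∑ j, ∑ y, B j y * bayesPred P π j = ∑ j, bayesPred P π j :=
        Finset.sum_congr rfl fun j _ => this j
    _ = 1 := bayesPred_sum hP hπ

lemma obsMarg_pos [NeZero X] {B : Matrix (Fin X) (Fin Y) ℝ} {P : Matrix (Fin X) (Fin X) ℝ}
    (hB : ∀ i y, 0 < B i y) (hP : rowStochastic P) {π : Fin X → ℝ} (hπ : inSimplex π)
    (y : Fin Y) : 0 < obsMarg B P π y := by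
  have hq : ∀ j, 0 ≤ bayesPred P π j := bayesPred_nonneg hP hπ.1
  have hqs : ∑ j, bayesPred P π j = 1 := bayesPred_sum hP hπ
  have : ∃ j, 0 < bayesPred P π j := by
    by_contra h
    push_neg at h
    have : ∑ j, bayesPred P π j ≤ 0 :=
      Finset.sum_nonpos fun j _ => h j
    linarith
  obtain ⟨j, hj⟩ := this
  have h1 : 0 < B j y * bayesPred P π j := mul_pos (hB j y) hj
  have h2 : B j y * bayesPred P π j ≤ obsMarg B P π y :=
    Finset.single_le_sum (fun j _ => mul_nonneg (hB j y).le (hq j)) (Finset.mem_univ j)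
  linarith

lemma bayesT_simplex [NeZero X] {B : Matrix (Fin X) (Fin Y) ℝ} {P : Matrix (Fin X) (Fin X) ℝ}
    (hB : ∀ i y, 0 < B i y) (hP : rowStochastic P) {π : Fin X → ℝ} (hπ : inSimplex π)
    (y : Fin Y) : inSimplex (bayesT B P π y) := by
  have hσ := obsMarg_pos hB hP hπ y
  constructor
  · intro j
    exact div_nonneg (mul_nonneg (hB j y).le (bayesPred_nonneg hP hπ.1 j)) hσ.le
  · unfold bayesT
    rw [← Finset.sum_div]
    rw [div_eq_one_iff_eq hσ.ne']
    rfl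

lemma mlr_bayesPred {P : Matrix (Fin X) (Fin X) ℝ} (hP2 : TP2 P)
    {π₁ π₂ : Fin X → ℝ} (h1 : ∀ i, 0 ≤ π₁ i) (h2 : ∀ i, 0 ≤ π₂ i)
    (hm : MLRle π₁ π₂) : MLRle (bayesPred P π₁) (bayesPred P π₂) := by
  intro j j' hjj'
  unfold bayesPred
  rw [Finset.sum_mul_sum, Finset.sum_mul_sum]
  rw [← sub_nonneg, ← Finset.sum_sub_distrib]
  simp_rw [← Finset.sum_sub_distrib]
  set f : Fin X → Fin X → ℝ :=
    fun m n => P m j * π₁ m * (P n j' * π₂ n) - P m j' * π₁ m * (P n j * π₂ n) with hf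
  show 0 ≤ ∑ m, ∑ n, f m n
  have hsymm : ∀ m n : Fin X, 0 ≤ f m n + f n m := by
    intro m n
    have hkey : f m n + f n m
        = (P m j * P n j' - P m j' * P n j) * (π₁ m * π₂ n - π₁ n * π₂ m) := by
      simp only [hf]; ring
    rcases lt_trichotomy m n with h | h | h
    · rw [hkey]
      apply mul_nonneg
      · have := hP2 m n j j' h hjj'; linarith
      · have := hm m n h; linarith
    · subst h; rw [hkey]; simp
    · have hkey2 : f m n + f n m
          = (P n j * P m j' - P n j' * P m j) * (π₁ n * π₂ m - π₁ m * π₂ n) := by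
        simp only [hf]; ring
      rw [hkey2]
      apply mul_nonneg
      · have := hP2 n m j j' h hjj'; linarith
      · have := hm n m h; linarith
  have hcomm : ∑ m, ∑ n, f m n = ∑ m, ∑ n, f n m := Finset.sum_comm
  have : 0 ≤ ∑ m, ∑ n, (f m n + f n m) :=
    Finset.sum_nonneg fun m _ => Finset.sum_nonneg fun n _ => hsymm m n
  simp_rw [Finset.sum_add_distrib] at this
  linarith [hcomm,this]

end PomdpLemmas

section PomdpLemmas2

variable {X Y : ℕ} [NeZero X]

lemma mlr_bayesT_pi {B : Matrix (Fin X) (Fin Y) ℝ} {P : Matrix (Fin X) (Fin X) ℝ}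
    (hBpos : ∀ i y, 0 < B i y) (hP : rowStochastic P) (hP2 : TP2 P)
    {π₁ π₂ : Fin X → ℝ} (h1 : inSimplex π₁) (h2 : inSimplex π₂) (hm : MLRle π₁ π₂)
    (y : Fin Y) : MLRle (bayesT B P π₁ y) (bayesT B P π₂ y) := by
  intro j j' hjj'
  have hσ1 := obsMarg_pos hBpos hP h1 y
  have hσ2 := obsMarg_pos hBpos hP h2 y
  have hq := mlr_bayesPred hP2 h1.1 h2.1 hm j j' hjj'
  unfold bayesT
  have e1 : B j' y * bayesPred P π₁ j' / obsMarg B P π₁ y *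
      (B j y * bayesPred P π₂ j / obsMarg B P π₂ y)
      = (B j y * B j' y) / (obsMarg B P π₁ y * obsMarg B P π₂ y) *
        (bayesPred P π₁ j' * bayesPred P π₂ j) := by ring
  have e2 : B j y * bayesPred P π₁ j / obsMarg B P π₁ y *
      (B j' y * bayesPred P π₂ j' / obsMarg B P π₂ y)
      = (B j y * B j' y) / (obsMarg B P π₁ y * obsMarg B P π₂ y) *
        (bayesPred P π₁ j * bayesPred P π₂ j') := by ring
  rw [e1, e2]
  apply mul_le_mul_of_nonneg_left hq
  apply div_nonneg (mul_nonneg (hBpos j y).le (hBpos j' y).le)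
  positivity

lemma mlr_bayesT_y {B : Matrix (Fin X) (Fin Y) ℝ} {P : Matrix (Fin X) (Fin X) ℝ}
    (hBpos : ∀ i y, 0 < B i y) (hB2 : TP2 B) (hP : rowStochastic P)
    {π : Fin X → ℝ} (hπ : inSimplex π) {y y' : Fin Y} (hyy' : y < y') :
    MLRle (bayesT B P π y) (bayesT B P π y') := by
  intro j j' hjj'
  have hσ1 := obsMarg_pos hBpos hP hπ y
  have hσ2 := obsMarg_pos hBpos hP hπ y'
  have hq : ∀ j, 0 ≤ bayesPred P π j := bayesPred_nonneg hP hπ.1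
  have hBB := hB2 j j' y y' hjj' hyy'
  unfold bayesT
  have e1 : B j' y * bayesPred P π j' / obsMarg B P π y *
      (B j y' * bayesPred P π j / obsMarg B P π y')
      = (bayesPred P π j * bayesPred P π j') / (obsMarg B P π y * obsMarg B P π y') *
        (B j y' * B j' y) := by ring
  have e2 : B j y * bayesPred P π j / obsMarg B P π y *
      (B j' y' * bayesPred P π j' / obsMarg B P π y')
      = (bayesPred P π j * bayesPred P π j') / (obsMarg B P π y * obsMarg B P π y') *
        (B j y * B j' y') := by ring
  rw [e1, e2]
  apply mul_le_mul_of_nonneg_left hBB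
  apply div_nonneg (mul_nonneg (hq j) (hq j'))
  positivity

lemma obsMarg_fosd {B : Matrix (Fin X) (Fin Y) ℝ} {P : Matrix (Fin X) (Fin X) ℝ}
    (hB : rowStochastic B) (hB2 : TP2 B) (hP : rowStochastic P) (hP2 : TP2 P)
    {π₁ π₂ : Fin X → ℝ} (h1 : inSimplex π₁) (h2 : inSimplex π₂) (hm : MLRle π₁ π₂)
    (c : Fin Y) :
    ∑ y ∈ Finset.univ.filter (fun y => c ≤ y), obsMarg B P π₁ y
      ≤ ∑ y ∈ Finset.univ.filter (fun y => c ≤ y), obsMarg B P π₂ y := by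
  classical
  set G : Fin X → ℝ := fun j => ∑ y ∈ Finset.univ.filter (fun y : Fin Y => c ≤ y), B j y
    with hG
  have hswap : ∀ π : Fin X → ℝ,
      ∑ y ∈ Finset.univ.filter (fun y => c ≤ y), obsMarg B P π y
        = ∑ j, G j * bayesPred P π j := by
    intro π
    unfold obsMarg
    rw [Finset.sum_comm]
    apply Finset.sum_congr rfl
    intro j _
    rw [hG, Finset.sum_mul]
  rw [hswap π₁, hswap π₂]
  have hGmono : Monotone G := by
    intro j j' hjj'
    rcases eq_or_lt_of_le hjj' with rfl | hlt
    · exact le_refl _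
    · exact fosd_of_mlr (fun y => hB.1 j y) (fun y => hB.1 j' y) (hB.2 j) (hB.2 j')
        (fun y y' hyy' => hB2 j j' y y' hlt hyy') c
  apply exp_mono_of_fosd
  · rw [bayesPred_sum hP h1, bayesPred_sum hP h2]
  · intro c'
    exact fosd_of_mlr (bayesPred_nonneg hP h1.1) (bayesPred_nonneg hP h2.1)
      (bayesPred_sum hP h1) (bayesPred_sum hP h2) (mlr_bayesPred hP2 h1.1 h2.1 hm) c'
  · exact hGmono

end PomdpLemmas2

section VMono

variable {X Y U : ℕ} [NeZero X] [NeZero U]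
variable {P : Fin U → Matrix (Fin X) (Fin X) ℝ} {B : Fin U → Matrix (Fin X) (Fin Y) ℝ}
variable {r : Fin U → Fin X → ℝ} {ρ : ℝ}

lemma VI_nonneg (hPrs : ∀ u, rowStochastic (P u)) (hBpos : ∀ u i y, 0 < B u i y)
    (hrnonneg : ∀ u i, 0 ≤ r u i) (hρ0 : 0 ≤ ρ) :
    ∀ k (π : Fin X → ℝ), inSimplex π → 0 ≤ VI P B r ρ k π := by
  intro k
  induction k with
  | zero => intro π _; simp [VI]
  | succ k ih =>
    intro π hπ
    obtain ⟨u, hu⟩ := (Finset.univ_nonempty : (Finset.univ : Finset (Fin U)).Nonempty)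
    show (0:ℝ) ≤ VI P B r ρ (k+1) π
    unfold VI
    apply le_trans _ (Finset.le_sup' _ hu)
    apply add_nonneg
    · exact Finset.sum_nonneg fun i _ => mul_nonneg (hrnonneg u i) (hπ.1 i)
    · apply mul_nonneg hρ0
      apply Finset.sum_nonneg
      intro y _
      exact mul_nonneg (ih _ (bayesT_simplex (hBpos u) (hPrs u) hπ y))
        (obsMarg_nonneg (fun i y => (hBpos u i y).le) (hPrs u) hπ.1 y)

lemma VI_mono (hPrs : ∀ u, rowStochastic (P u)) (hBrs : ∀ u, rowStochastic (B u))
    (hBpos : ∀ u i y, 0 < B u i y) (hρ0 : 0 ≤ ρ)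
    (hA1 : ∀ u, Monotone (r u)) (hA2 : ∀ u, TP2 (P u)) (hA3 : ∀ u, TP2 (B u)) :
    ∀ k (π₁ π₂ : Fin X → ℝ), inSimplex π₁ → inSimplex π₂ → MLRle π₁ π₂ →
      VI P B r ρ k π₁ ≤ VI P B r ρ k π₂ := by
  intro k
  induction k with
  | zero => intro π₁ π₂ _ _ _; simp [VI]
  | succ k ih =>
    intro π₁ π₂ h1 h2 hm
    show VI P B r ρ (k+1) π₁ ≤ VI P B r ρ (k+1) π₂
    unfold VI
    apply Finset.sup'_le
    intro u hu
    apply le_trans _ (Finset.le_sup' _ hu)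
    have t1 : ∑ i, r u i * π₁ i ≤ ∑ i, r u i * π₂ i := by
      apply exp_mono_of_fosd (by rw [h1.2, h2.2])
        (fun c => fosd_of_mlr h1.1 h2.1 h1.2 h2.2 hm c) (hA1 u)
    have t2 : ∑ y, VI P B r ρ k (bayesT (B u) (P u) π₁ y) * obsMarg (B u) (P u) π₁ y
        ≤ ∑ y, VI P B r ρ k (bayesT (B u) (P u) π₁ y) * obsMarg (B u) (P u) π₂ y := by
      have hc : ∀ y, VI P B r ρ k (bayesT (B u) (P u) π₁ y) * obsMarg (B u) (P u) π₁ y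
          = (fun y => VI P B r ρ k (bayesT (B u) (P u) π₁ y)) y * obsMarg (B u) (P u) π₁ y :=
        fun y => rfl
      apply exp_mono_of_fosd (a := obsMarg (B u) (P u) π₁) (b := obsMarg (B u) (P u) π₂)
        (by rw [obsMarg_sum (hBrs u) (hPrs u) h1, obsMarg_sum (hBrs u) (hPrs u) h2])
        (fun c => obsMarg_fosd (hBrs u) (hA3 u) (hPrs u) (hA2 u) h1 h2 hm c)
      intro y y' hyy'
      rcases eq_or_lt_of_le hyy' with rfl | hlt
      · exact le_refl _
      · exact ih _ _ (bayesT_simplex (hBpos u) (hPrs u) h1 y)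
          (bayesT_simplex (hBpos u) (hPrs u) h1 y')
          (mlr_bayesT_y (hBpos u) (hA3 u) (hPrs u) h1 hlt)
    have t3 : ∑ y, VI P B r ρ k (bayesT (B u) (P u) π₁ y) * obsMarg (B u) (P u) π₂ y
        ≤ ∑ y, VI P B r ρ k (bayesT (B u) (P u) π₂ y) * obsMarg (B u) (P u) π₂ y := by
      apply Finset.sum_le_sum
      intro y _
      apply mul_le_mul_of_nonneg_right
      · exact ih _ _ (bayesT_simplex (hBpos u) (hPrs u) h1 y)
          (bayesT_simplex (hBpos u) (hPrs u) h2 y)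
          (mlr_bayesT_pi (hBpos u) (hPrs u) (hA2 u) h1 h2 hm y)
      · exact obsMarg_nonneg (fun i y => (hBpos u i y).le) (hPrs u) h2.1 y
    exact add_le_add t1 (mul_le_mul_of_nonneg_left (t2.trans t3) hρ0)

end VMono

section PWL

lemma sup'_mul_right {α : Type*} (s : Finset α) (h : s.Nonempty) (f : α → ℝ) {c : ℝ}
    (hc : 0 ≤ c) : (s.sup' h f) * c = s.sup' h (fun x => f x * c) := by
  rcases eq_or_lt_of_le hc with rfl | hc
  · simp
  · apply le_antisymm
    · rw [Finset.le_sup'_iff]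
      obtain ⟨a, ha, hfa⟩ := Finset.exists_mem_eq_sup' h f
      exact ⟨a, ha, by rw [hfa]⟩
    · rw [Finset.sup'_le_iff]
      intro a ha
      exact mul_le_mul_of_nonneg_right (Finset.le_sup' f ha) hc.le

lemma add_sup' {α : Type*} (s : Finset α) (h : s.Nonempty) (f : α → ℝ) (c : ℝ) :
    c + s.sup' h f = s.sup' h (fun x => c + f x) := by
  apply le_antisymm
  · rw [Finset.le_sup'_iff]
    obtain ⟨a, ha, hfa⟩ := Finset.exists_mem_eq_sup' h f
    exact ⟨a, ha, by rw [hfa]⟩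
  · rw [Finset.sup'_le_iff]
    intro a ha
    exact add_le_add (le_refl c) (Finset.le_sup' f ha)

lemma sum_sup'_pi {ι β : Type*} [Fintype ι] [DecidableEq ι] (Γ : Finset β) (hΓ : Γ.Nonempty)
    (g : ι → β → ℝ) :
    ∑ y : ι, Γ.sup' hΓ (g y) =
      (Fintype.piFinset fun _ : ι => Γ).sup' (Fintype.piFinset_nonempty.2 fun _ => hΓ)
        (fun G => ∑ y : ι, g y (G y)) := by
  apply le_antisymm
  · rw [Finset.le_sup'_iff]
    have : ∀ y : ι, ∃ b ∈ Γ, Γ.sup' hΓ (g y) = g y b := by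
      intro y; obtain ⟨b, hb, hbe⟩ := Finset.exists_mem_eq_sup' hΓ (g y); exact ⟨b, hb, hbe⟩
    choose G hG hGe using this
    refine ⟨G, Fintype.mem_piFinset.2 hG, ?_⟩
    exact le_of_eq (Finset.sum_congr rfl fun y _ => hGe y)
  · rw [Finset.sup'_le_iff]
    intro G hG
    exact Finset.sum_le_sum fun y _ => Finset.le_sup' (g y) (Fintype.mem_piFinset.1 hG y)

variable {X Y U : ℕ} [NeZero X] [NeZero U]

open Classical in
/-- The finite set of linear pieces of the value function at horizon `k`. -/
noncomputable def Gam (P : Fin U → Matrix (Fin X) (Fin X) ℝ)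
    (B : Fin U → Matrix (Fin X) (Fin Y) ℝ) (r : Fin U → Fin X → ℝ) (ρ : ℝ) :
    ℕ → Finset (Fin X → ℝ)
  | 0 => {fun _ => 0}
  | (k+1) =>
      Finset.image (fun ug : Fin U × (Fin Y → (Fin X → ℝ)) =>
          fun i => r ug.1 i + ρ * ∑ y, ∑ j, ug.2 y j * (B ug.1 j y * P ug.1 i j))
        (Finset.univ ×ˢ Fintype.piFinset fun _ => Gam P B r ρ k)

open Classical in
lemma Gam_succ (P : Fin U → Matrix (Fin X) (Fin X) ℝ)
    (B : Fin U → Matrix (Fin X) (Fin Y) ℝ) (r : Fin U → Fin X → ℝ) (ρ : ℝ) (k : ℕ) :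
    Gam P B r ρ (k+1) = Finset.image (fun ug : Fin U × (Fin Y → (Fin X → ℝ)) =>
        fun i => r ug.1 i + ρ * ∑ y, ∑ j, ug.2 y j * (B ug.1 j y * P ug.1 i j))
      (Finset.univ ×ˢ Fintype.piFinset fun _ => Gam P B r ρ k) := rfl

lemma Gam_nonempty (P : Fin U → Matrix (Fin X) (Fin X) ℝ)
    (B : Fin U → Matrix (Fin X) (Fin Y) ℝ) (r : Fin U → Fin X → ℝ) (ρ : ℝ) (k : ℕ) :
    (Gam P B r ρ k).Nonempty := by
  induction k with
  | zero => exact ⟨fun _ => 0, by simp [Gam]⟩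
  | succ k ih =>
    unfold Gam
    apply Finset.Nonempty.image
    exact Finset.Nonempty.product Finset.univ_nonempty (Fintype.piFinset_nonempty.2 fun _ => ih)

lemma VI_eq_sup (P : Fin U → Matrix (Fin X) (Fin X) ℝ) (hPrs : ∀ u, rowStochastic (P u))
    (B : Fin U → Matrix (Fin X) (Fin Y) ℝ) (hBpos : ∀ u i y, 0 < B u i y)
    (r : Fin U → Fin X → ℝ) {ρ : ℝ} (hρ0 : 0 ≤ ρ) :
    ∀ k (π : Fin X → ℝ), inSimplex π →
      VI P B r ρ k π = (Gam P B r ρ k).sup' (Gam_nonempty P B r ρ k)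
        (fun γ => ∑ i, γ i * π i) := by
  intro k
  induction k with
  | zero =>
    intro π _
    simp [VI, Gam]
  | succ k ih =>
    intro π hπ
    show VI P B r ρ (k+1) π = _
    unfold VI
    have hstep : ∀ u : Fin U,
        (∑ i, r u i * π i) + ρ * ∑ y, VI P B r ρ k (bayesT (B u) (P u) π y) *
            obsMarg (B u) (P u) π y
          = (Fintype.piFinset fun _ : Fin Y => Gam P B r ρ k).sup'
              (Fintype.piFinset_nonempty.2 fun _ => Gam_nonempty P B r ρ k)
              (fun G => (∑ i, r u i * π i) +
                ρ * ∑ y, ∑ j, G y j * (B u j y * bayesPred (P u) π j)) := by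
      intro u
      have hy : ∀ y : Fin Y,
          VI P B r ρ k (bayesT (B u) (P u) π y) * obsMarg (B u) (P u) π y
            = (Gam P B r ρ k).sup' (Gam_nonempty P B r ρ k)
                (fun γ => ∑ j, γ j * (B u j y * bayesPred (P u) π j)) := by
        intro y
        have hσ := obsMarg_pos (hBpos u) (hPrs u) hπ y
        rw [ih _ (bayesT_simplex (hBpos u) (hPrs u) hπ y),
          sup'_mul_right _ _ _ hσ.le]
        apply Finset.sup'_congr _ rfl
        intro γ _
        rw [Finset.sum_mul]
        apply Finset.sum_congr rfl
        intro j _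
        unfold bayesT
        field_simp
      calc (∑ i, r u i * π i) + ρ * ∑ y, VI P B r ρ k (bayesT (B u) (P u) π y) *
              obsMarg (B u) (P u) π y
          = (∑ i, r u i * π i) + ρ * ∑ y, (Gam P B r ρ k).sup' (Gam_nonempty P B r ρ k)
              (fun γ => ∑ j, γ j * (B u j y * bayesPred (P u) π j)) := by
            rw [Finset.sum_congr rfl fun y _ => hy y]
        _ = (∑ i, r u i * π i) + ρ * (Fintype.piFinset fun _ : Fin Y => Gam P B r ρ k).sup'
              (Fintype.piFinset_nonempty.2 fun _ => Gam_nonempty P B r ρ k)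
              (fun G => ∑ y, ∑ j, G y j * (B u j y * bayesPred (P u) π j)) := by
            rw [sum_sup'_pi]
        _ = _ := by
            rw [mul_comm ρ _, sup'_mul_right _ _ _ hρ0, add_sup']
            apply Finset.sup'_congr _ rfl
            intro G _
            rw [mul_comm]
    calc (Finset.univ.sup' Finset.univ_nonempty fun u =>
            (∑ i, r u i * π i) + ρ * ∑ y, VI P B r ρ k (bayesT (B u) (P u) π y) *
              obsMarg (B u) (P u) π y)
        = Finset.univ.sup' Finset.univ_nonempty (fun u =>
            (Fintype.piFinset fun _ : Fin Y => Gam P B r ρ k).sup'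
              (Fintype.piFinset_nonempty.2 fun _ => Gam_nonempty P B r ρ k)
              (fun G => (∑ i, r u i * π i) +
                ρ * ∑ y, ∑ j, G y j * (B u j y * bayesPred (P u) π j))) := by
          exact Finset.sup'_congr _ rfl fun u _ => hstep u
      _ = ((Finset.univ : Finset (Fin U)) ×ˢ
            (Fintype.piFinset fun _ : Fin Y => Gam P B r ρ k)).sup'
            (Finset.Nonempty.product Finset.univ_nonempty
              (Fintype.piFinset_nonempty.2 fun _ => Gam_nonempty P B r ρ k))
            (fun ug => (∑ i, r ug.1 i * π i) +
              ρ * ∑ y, ∑ j, ug.2 y j * (B ug.1 j y * bayesPred (P ug.1) π j)) := by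
          rw [Finset.sup'_product_left]
      _ = _ := by
          simp only [Gam_succ]
          rw [Finset.sup'_image]
          apply Finset.sup'_congr _ rfl
          intro ug _
          show (∑ i, r ug.1 i * π i) +
              ρ * ∑ y, ∑ j, ug.2 y j * (B ug.1 j y * bayesPred (P ug.1) π j)
            = ∑ i, (r ug.1 i + ρ * ∑ y, ∑ j, ug.2 y j * (B ug.1 j y * P ug.1 i j)) * π i
          simp only [add_mul, Finset.sum_add_distrib]
          congr 1
          unfold bayesPred
          symm
          simp only [Finset.mul_sum, Finset.sum_mul]
          rw [Finset.sum_comm]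
          apply Finset.sum_congr rfl
          intro y _
          rw [Finset.sum_comm]
          apply Finset.sum_congr rfl
          intro j _
          apply Finset.sum_congr rfl
          intro x _
          ring

end PWL


lemma chainRep (g : ℝ → ℝ) :
    ∀ (m : ℕ) (t : ℕ → ℝ) (s : ℕ → ℝ),
    1 ≤ m →
    (∀ i, i < m → t i < t (i+1)) →
    (∀ i, i < m → ∀ ε, t i ≤ ε → ε ≤ t (i+1) → g ε = g (t i) + s i * (ε - t i)) →
    (∀ i, i + 1 < m → s i ≤ s (i+1)) →
    0 ≤ s 0 → 0 ≤ g (t 0) →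
    ∃ (n : ℕ) (α f : Fin n → ℝ), (∀ i, 0 ≤ α i) ∧
      (∀ ε, t 0 ≤ ε → ε ≤ t m → g ε = ∑ i, max (α i * ε - f i) 0) ∧
      (∀ i, f i ≤ α i * t m) ∧ (∑ i, α i = s (m-1)) := by
  intro m
  induction m with
  | zero => omega
  | succ m ih =>
    intro t s _ hlt haff hmono hs0 hg0
    rcases Nat.eq_zero_or_pos m with rfl | hm
    · -- base case: one interval
      refine ⟨2, ![0, s 0], ![-(g (t 0)), s 0 * t 0], ?_, ?_, ?_, ?_⟩
      · intro i; fin_cases i <;> simp [hs0]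
      · intro ε h0 h1
        rw [haff 0 (by omega) ε h0 h1, Fin.sum_univ_two]
        have ht01 : t 0 ≤ ε := h0
        have e1 : max ((0:ℝ) * ε - -(g (t 0))) 0 = g (t 0) := by
          rw [max_eq_left]; ring; simp [hg0]
        have e2 : max (s 0 * ε - s 0 * t 0) 0 = s 0 * (ε - t 0) := by
          rw [max_eq_left]; ring; nlinarith
        simp only [Matrix.cons_val_zero, Matrix.cons_val_one, Matrix.head_cons]
        rw [e1, e2]
      · intro i
        have ht01 : t 0 ≤ t 1 := (hlt 0 (by omega)).le
        fin_cases i <;> simp <;> nlinarith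
      · simp [Fin.sum_univ_two]
    · -- inductive step
      obtain ⟨n, α, f, hα, hrep, hkink, hsum⟩ :=
        ih t s hm (fun i hi => hlt i (by omega)) (fun i hi => haff i (by omega))
          (fun i hi => hmono i (by omega)) hs0 hg0
      have hsm : s (m-1) ≤ s m := by
        have := hmono (m-1) (by omega)
        have hm1 : m - 1 + 1 = m := by omega
        rwa [hm1] at this
      set δ : ℝ := s m - s (m-1) with hδ
      have hδ0 : 0 ≤ δ := by simp [hδ]; linarith
      refine ⟨n+1, Fin.snoc α δ, Fin.snoc f (δ * t m), ?_, ?_, ?_, ?_⟩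
      · intro i
        refine Fin.lastCases ?_ (fun j => ?_) i
        · simp [hδ0]
        · simp [hα j]
      · intro ε h0 h1
        have htm : t m < t (m+1) := hlt m (by omega)
        rw [Fin.sum_univ_castSucc]
        simp only [Fin.snoc_castSucc, Fin.snoc_last]
        rcases le_or_gt ε (t m) with hε | hε
        · rw [hrep ε h0 hε]
          have : max (δ * ε - δ * t m) 0 = 0 := by
            rw [max_eq_right]; nlinarith
          rw [this, add_zero]
        · have haffm := haff m (by omega) ε hε.le h1
          have hgtm : g (t m) = ∑ i, (α i * t m - f i) := by
            rw [hrep (t m) ?_ (le_refl _)]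
            · apply Finset.sum_congr rfl
              intro i _
              rw [max_eq_left]
              linarith [hkink i]
            · -- t 0 ≤ t m
              have : ∀ j, j ≤ m → t 0 ≤ t j := by
                intro j hj
                induction j with
                | zero => exact le_refl _
                | succ j ihj =>
                  exact (ihj (by omega)).trans (hlt j (by omega)).le
              exact this m (le_refl m)
          have hterm : ∀ i : Fin n, max (α i * ε - f i) 0 = α i * ε - f i := by
            intro i
            rw [max_eq_left]
            have h1' : f i ≤ α i * t m := hkink i
            have h2' : α i * t m ≤ α i * ε := by
              apply mul_le_mul_of_nonneg_left hε.le (hα i)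
            linarith
          have hlast : max (δ * ε - δ * t m) 0 = δ * (ε - t m) := by
            rw [max_eq_left]; ring; nlinarith
          rw [haffm, hgtm]
          rw [Finset.sum_congr rfl (fun i _ => hterm i), hlast]
          have : ∑ i : Fin n, (α i * ε - f i)
              = ∑ i : Fin n, (α i * t m - f i) + (∑ i, α i) * (ε - t m) := by
            rw [Finset.sum_mul]
            rw [← Finset.sum_add_distrib]
            apply Finset.sum_congr rfl
            intro i _
            ring
          rw [this, hsum]
          ring
      · intro i
        have htm : t m ≤ t (m+1) := (hlt m (by omega)).le
        refine Fin.lastCases ?_ (fun j => ?_) i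
        · simp only [Fin.snoc_last]
          nlinarith
        · simp only [Fin.snoc_castSucc]
          have h2' : α j * t m ≤ α j * t (m+1) := mul_le_mul_of_nonneg_left htm (hα j)
          linarith [hkink j]
      · rw [Fin.sum_univ_castSucc]
        simp only [Fin.snoc_castSucc, Fin.snoc_last, hsum]
        simp [hδ]



lemma wedge_rep_of_sup' (S : Finset (ℝ × ℝ)) (hS : S.Nonempty)
    (g : ℝ → ℝ) (hg : ∀ ε, g ε = S.sup' hS (fun p => p.1 * ε + p.2))
    (hmono : ∀ x y, 0 ≤ x → x ≤ y → y ≤ 1 → g x ≤ g y)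
    (hg0 : 0 ≤ g 0) :
    ∃ (n : ℕ) (α f : Fin n → ℝ), (∀ i, 0 ≤ α i) ∧
      ∀ ε, 0 ≤ ε → ε ≤ 1 → g ε = ∑ i, max (α i * ε - f i) 0 := by
  classical
  set T : Finset ℝ := insert 0 (insert 1 (((S ×ˢ S).image
      (fun pq : (ℝ × ℝ) × (ℝ × ℝ) => (pq.2.2 - pq.1.2) / (pq.1.1 - pq.2.1))).filter
      (fun x => 0 ≤ x ∧ x ≤ 1))) with hT
  have h0T : (0:ℝ) ∈ T := by simp [hT]
  have h1T : (1:ℝ) ∈ T := by simp [hT]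
  have hTmem : ∀ x ∈ T, 0 ≤ x ∧ x ≤ 1 := by
    intro x hx
    rw [hT] at hx
    rcases Finset.mem_insert.1 hx with rfl | hx
    · norm_num
    rcases Finset.mem_insert.1 hx with rfl | hx
    · norm_num
    exact (Finset.mem_filter.1 hx).2
  set L : List ℝ := T.sort (· ≤ ·) with hL
  have hsorted : List.Pairwise (· < ·) L := T.sortedLT_sort.pairwise
  have hmemL : ∀ x, x ∈ L ↔ x ∈ T := fun x => Finset.mem_sort _
  have hlen : 2 ≤ L.length := by
    rw [hL, Finset.length_sort]
    exact Finset.one_lt_card.2 ⟨0, h0T, 1, h1T, by norm_num⟩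
  set m : ℕ := L.length - 1 with hm
  have hm1 : 1 ≤ m := by omega
  have hmlen : m + 1 = L.length := by omega
  set t : ℕ → ℝ := fun i => if h : i < L.length then L.get ⟨i, h⟩ else 1 with ht
  have htval : ∀ i (h : i < L.length), t i = L.get ⟨i, h⟩ := by
    intro i h; simp [ht, h]
  have hgetmem : ∀ i (h : i < L.length), t i ∈ T := by
    intro i h; rw [htval i h, ← hmemL]; exact L.get_mem _
  have htstrict : ∀ i j, i < j → j ≤ m → t i < t j := by
    intro i j hij hjm
    have hi : i < L.length := by omega
    have hj : j < L.length := by omega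
    rw [htval i hi, htval j hj]
    exact hsorted.sortedLT.strictMono_get (by simp [Fin.mk_lt_mk]; omega)
  have htmono : ∀ i j, i ≤ j → j ≤ m → t i ≤ t j := by
    intro i j hij hjm
    rcases eq_or_lt_of_le hij with rfl | h
    · exact le_refl _
    · exact (htstrict i j h hjm).le
  have ht0 : t 0 = 0 := by
    have h0L : (0:ℝ) ∈ L := (hmemL 0).2 h0T
    obtain ⟨k, hk⟩ := List.mem_iff_get.1 h0L
    have h0len : 0 < L.length := by omega
    have : t 0 ≤ 0 := by
      rw [htval 0 h0len, ← hk]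
      exact hsorted.sortedLT.strictMono_get.monotone (by simp [Fin.le_def])
    have h2 := (hTmem _ (hgetmem 0 h0len)).1
    linarith
  have htm : t m = 1 := by
    have h1L : (1:ℝ) ∈ L := (hmemL 1).2 h1T
    obtain ⟨k, hk⟩ := List.mem_iff_get.1 h1L
    have hmlt : m < L.length := by omega
    have : (1:ℝ) ≤ t m := by
      rw [htval m hmlt, ← hk]
      apply hsorted.sortedLT.strictMono_get.monotone
      simp [Fin.le_def]
      omega
    have h2 := (hTmem _ (hgetmem m hmlt)).2
    linarith
  have htrange : ∀ i, i ≤ m → 0 ≤ t i ∧ t i ≤ 1 := by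
    intro i hi
    exact hTmem _ (hgetmem i (by omega))
  -- the key no-crossing lemma
  have hpiece : ∀ i, i < m → ∃ p, p ∈ S ∧
      ∀ ε, t i ≤ ε → ε ≤ t (i+1) → g ε = p.1 * ε + p.2 := by
    intro i hi
    set x := t i with hx
    set y := t (i+1) with hy
    have hxy : x < y := htstrict i (i+1) (by omega) (by omega)
    have hx0 : 0 ≤ x := (htrange i (by omega)).1
    have hy1 : y ≤ 1 := (htrange (i+1) (by omega)).2
    set mid := (x + y) / 2 with hmid
    have hxmid : x < mid := by rw [hmid]; linarith
    have hmidy : mid < y := by rw [hmid]; linarith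
    obtain ⟨p, hpS, hpmid⟩ := Finset.exists_mem_eq_sup' hS (fun p : ℝ × ℝ => p.1 * mid + p.2)
    refine ⟨p, hpS, ?_⟩
    intro ε hε1 hε2
    rw [hg]
    apply le_antisymm
    · apply Finset.sup'_le
      intro q hq
      by_contra hcon
      push_neg at hcon
      have hqmid : q.1 * mid + q.2 ≤ p.1 * mid + p.2 := by
        rw [← hpmid]
        exact Finset.le_sup' (fun p : ℝ × ℝ => p.1 * mid + p.2) hq
      set φa := q.1 - p.1 with hφa
      set φb := q.2 - p.2 with hφb
      have hφmid : φa * mid + φb ≤ 0 := by rw [hφa, hφb]; linarith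
      have hφε : 0 < φa * ε + φb := by rw [hφa, hφb]; linarith
      have hφane : φa ≠ 0 := by
        intro h0
        rw [h0] at hφmid hφε
        simp at hφmid hφε
        linarith
      set rr := -φb / φa with hrr
      have hbounds : x < rr ∧ rr < y := by
        rcases lt_trichotomy ε mid with hem | heq | hem
        · -- ε < mid
          have hφaneg : φa < 0 := by
            by_contra h
            push_neg at h
            nlinarith [mul_nonneg h (sub_nonneg.2 hem.le)]
          have hrrmid : rr ≤ mid := by
            rw [hrr, div_le_iff_of_neg hφaneg]
            linarith
          have hεrr : ε < rr := by
            rw [hrr, lt_div_iff_of_neg hφaneg]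
            linarith
          exact ⟨lt_of_le_of_lt hε1 hεrr, lt_of_le_of_lt hrrmid hmidy⟩
        · rw [heq] at hφε; linarith
        · -- mid < ε
          have hφapos : 0 < φa := by
            by_contra h
            push_neg at h
            nlinarith [mul_nonpos_of_nonpos_of_nonneg h (sub_nonneg.2 hem.le)]
          have hmidrr : mid ≤ rr := by
            rw [hrr, le_div_iff₀ hφapos]
            linarith
          have hrrε : rr < ε := by
            rw [hrr, div_lt_iff₀ hφapos]
            linarith
          exact ⟨lt_of_lt_of_le hxmid hmidrr, lt_of_lt_of_le hrrε hε2⟩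
      obtain ⟨hxrr, hrry⟩ := hbounds
      have hrrT : rr ∈ T := by
        rw [hT]
        apply Finset.mem_insert_of_mem
        apply Finset.mem_insert_of_mem
        rw [Finset.mem_filter]
        constructor
        · apply Finset.mem_image.2
          refine ⟨(p, q), Finset.mem_product.2 ⟨hpS, hq⟩, ?_⟩
          show (q.2 - p.2) / (p.1 - q.1) = rr
          rw [hrr, hφa, hφb]
          rw [show p.1 - q.1 = -(q.1 - p.1) by ring, div_neg, neg_div]
        · exact ⟨by linarith, by linarith⟩
      obtain ⟨k, hk⟩ := List.mem_iff_get.1 ((hmemL rr).2 hrrT)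
      have hik : i < k.val := by
        have : L.get ⟨i, by omega⟩ < L.get k := by
          rw [hk, ← htval i (by omega)]
          exact hxrr
        have := hsorted.sortedLT.strictMono_get.lt_iff_lt.1 this
        simpa [Fin.lt_def] using this
      have hki : k.val < i + 1 := by
        have : L.get k < L.get ⟨i+1, by omega⟩ := by
          rw [hk, ← htval (i+1) (by omega)]
          exact hrry
        have := hsorted.sortedLT.strictMono_get.lt_iff_lt.1 this
        simpa [Fin.lt_def] using this
      omega
    · exact Finset.le_sup' (fun p : ℝ × ℝ => p.1 * ε + p.2) hpS
  -- assemble chain data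
  have hpiece' : ∀ i : ℕ, ∃ p : ℝ × ℝ, p ∈ S ∧
      (i < m → ∀ ε, t i ≤ ε → ε ≤ t (i+1) → g ε = p.1 * ε + p.2) := by
    intro i
    by_cases h : i < m
    · obtain ⟨p, h1, h2⟩ := hpiece i h
      exact ⟨p, h1, fun _ => h2⟩
    · exact ⟨hS.choose, hS.choose_spec, fun h' => absurd h' h⟩
  choose p hpS hpaff using hpiece'
  set sl : ℕ → ℝ := fun i => (p i).1 with hsl
  have haff : ∀ i, i < m → ∀ ε, t i ≤ ε → ε ≤ t (i+1) → g ε = g (t i) + sl i * (ε - t i) := by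
    intro i hi ε h1 h2
    have e1 := hpaff i hi ε h1 h2
    have e2 := hpaff i hi (t i) (le_refl _) (htstrict i (i+1) (by omega) (by omega)).le
    rw [e1, e2, hsl]
    ring
  have hslope : ∀ i, i + 1 < m → sl i ≤ sl (i+1) := by
    intro i hi
    have e1 := hpaff i (by omega) (t (i+1))
      (htstrict i (i+1) (by omega) (by omega)).le (le_refl _)
    have e2 := hpaff (i+1) (by omega) (t (i+1)) (le_refl _)
      (htstrict (i+1) (i+2) (by omega) (by omega)).le
    have e4 := hpaff (i+1) (by omega) (t (i+2))
      (htstrict (i+1) (i+2) (by omega) (by omega)).le (le_refl _)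
    have e3 : (p i).1 * t (i+2) + (p i).2 ≤ g (t (i+2)) := by
      rw [hg]
      exact Finset.le_sup' (fun p : ℝ × ℝ => p.1 * t (i+2) + p.2) (hpS i)
    have htt : t (i+1) < t (i+2) := htstrict (i+1) (i+2) (by omega) (by omega)
    rw [hsl]
    by_contra hcon
    push_neg at hcon
    nlinarith [mul_pos (sub_pos.2 htt) (sub_pos.2 hcon)]
  have hsl0 : 0 ≤ sl 0 := by
    have ht01 : t 0 < t 1 := htstrict 0 1 (by omega) (by omega)
    have h01 : g (t 0) ≤ g (t 1) := by
      apply hmono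
      · rw [ht0]
      · exact ht01.le
      · exact (htrange 1 (by omega)).2
    have := haff 0 (by omega) (t 1) ht01.le (le_refl _)
    by_contra hcon
    push_neg at hcon
    nlinarith
  obtain ⟨n, α, f, h1, h2, _, _⟩ := chainRep g m t sl hm1
    (fun i hi => htstrict i (i+1) (by omega) (by omega)) haff hslope hsl0
    (by rw [ht0]; exact hg0)
  exact ⟨n, α, f, h1, fun ε he0 he1 =>
    h2 ε (by rw [ht0]; exact he0) (by rw [htm]; exact he1)⟩

/-- Theorem 4 (statement 3): under A1–A3 and nonnegative rewards, on each line segment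
`ℓ(e_X, π̄)` from a belief `π̄` with `π̄(X) = 0` to the vertex `e_X`, the value function
is a finite sum of wedge functions of the scalar coordinate `ε = e_Xᵀπ`. -/
theorem value_function_wedge_sum_on_lines
    (X Y U : ℕ) [NeZero X] [NeZero U]
    (P : Fin U → Matrix (Fin X) (Fin X) ℝ) (hPrs : ∀ u, rowStochastic (P u))
    (B : Fin U → Matrix (Fin X) (Fin Y) ℝ) (hBrs : ∀ u, rowStochastic (B u))
    (hBpos : ∀ u i y, 0 < B u i y)
    (r : Fin U → Fin X → ℝ) (ρ : ℝ) (hρ0 : 0 ≤ ρ) (hρ1 : ρ < 1)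
    (hrnonneg : ∀ u i, 0 ≤ r u i)
    (hA1 : ∀ u, Monotone (r u))
    (hA2 : ∀ u, TP2 (P u))
    (hA3 : ∀ u, TP2 (B u)) :
    ∀ k : ℕ, ∀ πb : Fin X → ℝ, inSimplex πb → πb (lastIdx X) = 0 →
      ∃ n : ℕ, ∃ α f : Fin n → ℝ, (∀ i, 0 ≤ α i) ∧
        ∀ ε : ℝ, 0 ≤ ε → ε ≤ 1 →
          VI P B r ρ k
              (fun j => (1 - ε) * πb j + ε * (if j = lastIdx X then 1 else 0)) =
            ∑ i, max (α i * ε - f i) 0 := by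
  intro k πb hπb hπbX
  set π : ℝ → Fin X → ℝ :=
    fun ε j => (1 - ε) * πb j + ε * (if j = lastIdx X then 1 else 0) with hπ
  have hsimplex : ∀ ε, 0 ≤ ε → ε ≤ 1 → inSimplex (π ε) := by
    intro ε h0 h1
    constructor
    · intro j
      apply add_nonneg
      · exact mul_nonneg (by linarith) (hπb.1 j)
      · apply mul_nonneg h0
        split <;> norm_num
    · rw [hπ]
      simp only [Finset.sum_add_distrib, ← Finset.mul_sum]
      rw [hπb.2, Finset.sum_ite_eq' Finset.univ (lastIdx X) (fun _ => (1:ℝ))]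
      simp
  have hMLR : ∀ ε₁ ε₂, 0 ≤ ε₁ → ε₁ ≤ ε₂ → ε₂ ≤ 1 → MLRle (π ε₁) (π ε₂) := by
    intro ε₁ ε₂ h0 h12 h1
    intro i j hij
    by_cases hj : j = lastIdx X
    · have hi : i ≠ lastIdx X := by
        intro h
        rw [h, hj] at hij
        exact lt_irrefl _ hij
      subst hj
      simp only [hπ, if_pos rfl, if_neg hi, hπbX, ite_true, eq_self_iff_true,
        mul_one, mul_zero, add_zero, mul_comm]
      have hpb := hπb.1 i
      nlinarith [mul_nonneg (hπb.1 i) (sub_nonneg.2 h12)]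
    · have hi : i ≠ lastIdx X := by
        intro h
        apply hj
        have hjv : j.val ≤ X - 1 := by
          have := j.2; omega
        have hiv : i.val = X - 1 := by
          rw [h]; rfl
        have := hij
        rw [Fin.lt_def] at this
        apply Fin.ext
        show j.val = X - 1
        omega
      simp only [hπ, if_neg hi, if_neg hj]
      apply le_of_eq
      ring
  set c : (Fin X → ℝ) → ℝ := fun γ => ∑ i, γ i * πb i with hc
  set S : Finset (ℝ × ℝ) :=
    (Gam P B r ρ k).image (fun γ => (γ (lastIdx X) - c γ, c γ)) with hSdef
  have hS : S.Nonempty := (Gam_nonempty P B r ρ k).image _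
  set g : ℝ → ℝ := fun ε => S.sup' hS (fun p => p.1 * ε + p.2) with hgdef
  have hgVI : ∀ ε, 0 ≤ ε → ε ≤ 1 → VI P B r ρ k (π ε) = g ε := by
    intro ε h0 h1
    have himg : g ε = (Gam P B r ρ k).sup' (Gam_nonempty P B r ρ k)
        ((fun p : ℝ × ℝ => p.1 * ε + p.2) ∘
          (fun γ : Fin X → ℝ => (γ (lastIdx X) - c γ, c γ))) := by
      show S.sup' hS (fun p => p.1 * ε + p.2) = _
      exact Finset.sup'_image _ _
    rw [VI_eq_sup P hPrs B hBpos r hρ0 k (π ε) (hsimplex ε h0 h1), himg]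
    apply Finset.sup'_congr _ rfl
    intro γ _
    show ∑ i, γ i * π ε i = (γ (lastIdx X) - c γ) * ε + c γ
    have expand : ∀ i : Fin X, γ i * π ε i
        = (1 - ε) * (γ i * πb i) + ε * (γ i * (if i = lastIdx X then 1 else 0)) := by
      intro i; rw [hπ]; ring
    rw [Finset.sum_congr rfl fun i _ => expand i, Finset.sum_add_distrib,
      ← Finset.mul_sum, ← Finset.mul_sum]
    have : ∑ i, γ i * (if i = lastIdx X then (1:ℝ) else 0) = γ (lastIdx X) := by
      simp [mul_ite]
    rw [this, hc]
    ring
  have hmono : ∀ x y, 0 ≤ x → x ≤ y → y ≤ 1 → g x ≤ g y := by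
    intro x y h0 hxy h1
    rw [← hgVI x h0 (hxy.trans h1), ← hgVI y (h0.trans hxy) h1]
    exact VI_mono hPrs hBrs hBpos hρ0 hA1 hA2 hA3 k _ _
      (hsimplex x h0 (hxy.trans h1)) (hsimplex y (h0.trans hxy) h1)
      (hMLR x y h0 hxy h1)
  have hg0 : 0 ≤ g 0 := by
    rw [← hgVI 0 (le_refl 0) (by norm_num)]
    exact VI_nonneg hPrs hBpos hrnonneg hρ0 k (π 0) (hsimplex 0 (le_refl 0) (by norm_num))
  obtain ⟨n, α, f, hα, hrep⟩ := wedge_rep_of_sup' S hS g (fun ε => rfl) hmono hg0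
  refine ⟨n, α, f, hα, ?_⟩
  intro ε h0 h1
  rw [show (fun j => (1 - ε) * πb j + ε * (if j = lastIdx X then 1 else 0)) = π ε from rfl]
  rw [hgVI ε h0 h1]
  exact hrep ε h0 h1
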